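/- arXiv:2412.16560 — 2 statements merged into one kernel-verified Lean document; each statement's English description precedes it below -/
import Mathlib

section
/- Let A = {a, b} be a two-letter alphabet and let u, v be words over A such that u does not end with the letter a and v does not start with the letter b. Then ρ(u·a·b·v) = 1 + ρ(u·v). -/
/-- Simon's congruence of order `k`: `u` and `v` have the same subwords
(subsequences) of length at most `k`. -/
def SimonCong {A : Type*} (k : ℕ) (u v : List A) : Prop :=
  ∀ s : List A, s.length ≤ k → (s.Sublist u ↔ s.Sublist v)

/-- The subword distance `δ(u,v) = sup {k | u ∼ₖ v} ∈ ℕ ∪ {∞}`. -/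
noncomputable def delta {A : Type*} (u v : List A) : ℕ∞ :=
  ⨆ k ∈ {k : ℕ | SimonCong k u v}, (k : ℕ∞)

/-- Right side distance `r(u,t) = δ(u, u·t)`. -/
noncomputable def sideR {A : Type*} (u t : List A) : ℕ∞ :=
  delta u (u ++ t)

/-- Left side distance `ℓ(t,u) = δ(t·u, u)`. -/
noncomputable def sideL {A : Type*} (t u : List A) : ℕ∞ :=
  delta (t ++ u) u

/-- The piecewise complexity `h(u)`: the least `n` such that every word
`v` with `u ∼ₙ v` equals `u`. -/
noncomputable def pieceH {A : Type*} (u : List A) : ℕ :=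
  sInf {n : ℕ | ∀ v : List A, SimonCong n u v → v = u}

/-- A word `u` is `m`-reduced if no strict subword of `u` is `∼ₘ`-equivalent to `u`. -/
def MReduced {A : Type*} (m : ℕ) (u : List A) : Prop :=
  ∀ u' : List A, u'.Sublist u → u' ≠ u → ¬ SimonCong m u' u

/-- The piecewise minimality index `ρ(u)`: the least `m` such that `u` is `m`-reduced. -/
noncomputable def rho {A : Type*} (u : List A) : ℕ :=
  sInf {m : ℕ | MReduced m u}

namespace Stmt18Aux

variable {A : Type*}
variable {A : Type*}

theorem simon_mono {k k' : ℕ} {u v : List A} (h : SimonCong k u v) (hk : k' ≤ k) :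
    SimonCong k' u v := fun s hs => h s (hs.trans hk)

theorem simon_symm {k : ℕ} {u v : List A} (h : SimonCong k u v) : SimonCong k v u :=
  fun s hs => (h s hs).symm

theorem simon_sandwich {k : ℕ} {l m w : List A} (hlm : l.Sublist m) (hmw : m.Sublist w)
    (h : SimonCong k l w) : SimonCong k m w := by
  intro s hs
  constructor
  · exact fun h' => h'.trans hmw
  · exact fun h' => ((h s hs).mpr h').trans hlm

theorem simon_reverse {k : ℕ} {u v : List A} (h : SimonCong k u v) :
    SimonCong k u.reverse v.reverse := by
  intro s hs
  have := h s.reverse (by simpa using hs)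
  constructor
  · intro h'
    have : s.reverse.Sublist v := this.mp (by
      have := List.reverse_sublist.mpr h'
      simpa using this)
    simpa using List.reverse_sublist.mpr this
  · intro h'
    have : s.reverse.Sublist u := this.mpr (by
      have := List.reverse_sublist.mpr h'
      simpa using this)
    simpa using List.reverse_sublist.mpr this

open Classical in
/-- Side distance: `sd c w` is the largest `k` with `c :: w ∼ₖ w` (binary-correct recursion). -/
noncomputable def sd (c : A) : List A → ℕ
  | [] => 0
  | e :: w => if e = c then 1 + sd c w else min (sd c w) (1 + sd e w)

@[simp] theorem sd_nil (c : A) : sd c ([] : List A) = 0 := by simp [sd]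

theorem sd_cons_self (c : A) (w : List A) : sd c (c :: w) = 1 + sd c w := by simp [sd]

theorem sd_cons_ne {e c : A} (h : e ≠ c) (w : List A) :
    sd c (e :: w) = min (sd c w) (1 + sd e w) := by simp [sd, h]

theorem sd_low (c : A) (w : List A) : SimonCong (sd c w) (c :: w) w := by
  induction w generalizing c with
  | nil =>
    intro s hs
    simp at hs
    subst hs
    simp
  | cons e w ih =>
    intro s hs
    constructor
    · intro hsub
      rcases List.sublist_cons_iff.mp hsub with h' | ⟨r, rfl, hr⟩
      · exact h'
      · -- s = c :: r, hr : r.Sublist (e :: w)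
        by_cases hec : e = c
        · subst hec
          rw [sd_cons_self] at hs
          have hrw : r.Sublist w := ((ih e) r (by simp at hs ⊢; omega)).mp hr
          exact List.cons_sublist_cons.mpr hrw
        · rw [sd_cons_ne hec] at hs
          rcases List.sublist_cons_iff.mp hr with h'' | ⟨r', rfl, hr'⟩
          · -- r ⊑ w, so c::r ⊑ c::w, use ih c
            have : (c :: r).Sublist w := (ih c (c :: r) (by simp at hs ⊢; omega)).mp
              (List.cons_sublist_cons.mpr h'')
            exact this.cons e
          · -- r = e :: r', r' ⊑ w
            have h1 : (e :: r').Sublist w := (ih e (e :: r') (by simp at hs ⊢; omega)).mp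
              (List.cons_sublist_cons.mpr hr')
            have h2 : (c :: e :: r').Sublist w := (ih c (c :: e :: r') (by simp at hs ⊢; omega)).mp
              (List.cons_sublist_cons.mpr h1)
            exact h2.cons e
    · intro hsub
      exact hsub.cons c

theorem sd_witness (c : A) (w : List A) :
    ∃ r : List A, (c :: r).length = sd c w + 1 ∧ (c :: r).Sublist (c :: w) ∧
      ¬ (c :: r).Sublist w := by
  induction w generalizing c with
  | nil => exact ⟨[], by simp, by simp, by simp⟩
  | cons e w ih =>
    by_cases hec : e = c
    · subst hec
      obtain ⟨r, hlen, hsub, hnsub⟩ := ih e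
      refine ⟨e :: r, ?_, ?_, ?_⟩
      · rw [sd_cons_self]; simp at hlen ⊢; omega
      · exact List.cons_sublist_cons.mpr hsub
      · intro h
        exact hnsub (List.cons_sublist_cons.mp h)
    · rw [sd_cons_ne hec]
      rcases le_or_gt (sd c w) (1 + sd e w) with hle | hlt
      · obtain ⟨r, hlen, hsub, hnsub⟩ := ih c
        refine ⟨r, ?_, ?_, ?_⟩
        · rw [min_eq_left hle]; exact hlen
        · exact hsub.trans (List.cons_sublist_cons.mpr (w.sublist_cons_self e))
        · intro h
          rcases List.sublist_cons_iff.mp h with h' | ⟨r', hr', _⟩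
          · exact hnsub h'
          · exact hec (by injection hr'.symm)
      · obtain ⟨r, hlen, hsub, hnsub⟩ := ih e
        refine ⟨e :: r, ?_, ?_, ?_⟩
        · rw [min_eq_right (by omega)]; simp at hlen ⊢; omega
        · exact List.cons_sublist_cons.mpr hsub
        · intro h
          rcases List.sublist_cons_iff.mp h with h' | ⟨r', hr', _⟩
          · exact hnsub (((e :: r).sublist_cons_self c).trans h')
          · exact hec (by injection hr'.symm)

theorem sd_iff (c : A) (w : List A) (k : ℕ) : SimonCong k (c :: w) w ↔ k ≤ sd c w := by
  constructor
  · intro h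
    by_contra hk
    push_neg at hk
    obtain ⟨r, hlen, hsub, hnsub⟩ := sd_witness c w
    exact hnsub ((h (c :: r) (by omega)).mp hsub)
  · intro hk
    exact simon_mono (sd_low c w) hk

theorem sd_iff_right (c : A) (x : List A) (k : ℕ) :
    SimonCong k (x ++ [c]) x ↔ k ≤ sd c x.reverse := by
  constructor
  · intro h
    have := simon_reverse h
    simp only [List.reverse_append, List.reverse_cons, List.reverse_nil, List.nil_append,
      List.singleton_append] at this
    exact (sd_iff c x.reverse k).mp this
  · intro hk
    have := simon_reverse ((sd_iff c x.reverse k).mpr hk)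
    simpa using this


theorem insert_le {x y : List A} {c : A} {r l : ℕ}
    (hr : SimonCong r (x ++ [c]) x) (hl : SimonCong l (c :: y) y) :
    SimonCong (r + l) (x ++ c :: y) (x ++ y) := by
  intro s hs
  constructor
  · intro hsub
    obtain ⟨s1, t, rfl, hs1, ht⟩ := List.sublist_append_iff.mp hsub
    rcases List.sublist_cons_iff.mp ht with h' | ⟨s2, rfl, hs2⟩
    · exact hs1.append h'
    · simp only [List.length_append, List.length_cons] at hs
      rcases le_or_gt (s1.length + 1) r with hc | hc
      · have h1 : (s1 ++ [c]).Sublist x :=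
          (hr (s1 ++ [c]) (by simp; omega)).mp (hs1.append (List.Sublist.refl [c]))
        have : (s1 ++ [c] ++ s2).Sublist (x ++ y) := h1.append hs2
        simpa using this
      · have h2 : (c :: s2).Sublist y :=
          (hl (c :: s2) (by simp; omega)).mp (List.cons_sublist_cons.mpr hs2)
        exact hs1.append h2
  · intro hsub
    exact hsub.trans (List.Sublist.append_left (y.sublist_cons_self c) x)

theorem del_char (x y : List A) (c : A) (n : ℕ) :
    SimonCong n (x ++ y) (x ++ c :: y) ↔ n ≤ sd c x.reverse + sd c y := by
  constructor
  · intro h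
    by_contra hk
    push_neg at hk
    -- witnesses
    obtain ⟨r1, hlen1, hsub1, hnsub1⟩ := sd_witness c x.reverse
    obtain ⟨s2, hlen2, hsub2, hnsub2⟩ := sd_witness c y
    -- left witness reversed: r1.reverse ++ [c] ⊑ x ++ [c], not ⊑ x
    have hr1x : r1.reverse.Sublist x := by
      have : r1.Sublist x.reverse := List.cons_sublist_cons.mp hsub1
      simpa using List.reverse_sublist.mpr this
    have hnl : ¬ (r1.reverse ++ [c]).Sublist x := by
      intro hcon
      apply hnsub1
      have := List.reverse_sublist.mpr hcon
      simpa using this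
    set S := r1.reverse ++ c :: s2 with hS
    have hSsub : S.Sublist (x ++ c :: y) := hr1x.append hsub2
    have hSlen : S.length ≤ n := by
      simp only [hS, List.length_append, List.length_cons, List.length_reverse]
      simp only [List.length_cons] at hlen1 hlen2
      omega
    have hSxy : S.Sublist (x ++ y) := (h S hSlen).mpr hSsub
    obtain ⟨γ, δ, hSeq, hγ, hδ⟩ := List.sublist_append_iff.mp hSxy
    rw [hS] at hSeq
    rcases List.append_eq_append_iff.mp hSeq with ⟨m, hm1, hm2⟩ | ⟨m, hm1, hm2⟩
    · -- γ = r1.reverse ++ m, c :: s2 = m ++ δ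
      cases m with
      | nil =>
        simp at hm2
        exact hnsub2 (hm2 ▸ hδ)
      | cons e m' =>
        have he : e = c := by injection hm2.symm
        subst he
        have : (r1.reverse ++ [e]).Sublist γ := by
          rw [hm1]
          exact List.Sublist.append_left (by simp) r1.reverse
        exact hnl (this.trans hγ)
    · -- r1.reverse = γ ++ m, δ = m ++ c :: s2
      apply hnsub2
      have : (c :: s2).Sublist δ := hm2 ▸ List.sublist_append_right m (c :: s2)
      exact this.trans hδ
  · intro hk
    have h1 : SimonCong (sd c x.reverse) (x ++ [c]) x := (sd_iff_right c x _).mpr le_rfl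
    have h2 : SimonCong (sd c y) (c :: y) y := sd_low c y
    exact simon_mono (simon_symm (insert_le h1 h2)) hk

theorem exists_del {l w : List A} (h : l.Sublist w) (hne : l ≠ w) :
    ∃ x c y, w = x ++ c :: y ∧ l.Sublist (x ++ y) := by
  induction h with
  | slnil => exact absurd rfl hne
  | cons e h ih => exact ⟨[], e, _, rfl, by simpa using h⟩
  | cons_cons e h ih =>
    obtain ⟨x, c, y, rfl, hs⟩ := ih (fun hh => hne (congrArg (e :: ·) hh))
    exact ⟨e :: x, c, y, rfl, List.cons_sublist_cons.mpr hs⟩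

theorem mreduced_iff (m : ℕ) (w : List A) :
    MReduced m w ↔ ∀ (x : List A) (c : A) (y : List A),
      w = x ++ c :: y → sd c x.reverse + sd c y < m := by
  constructor
  · intro h x c y hw
    by_contra hk
    push_neg at hk
    have hcong : SimonCong m (x ++ y) w := by
      rw [hw]; exact (del_char x y c m).mpr hk
    refine h (x ++ y) ?_ ?_ hcong
    · rw [hw]; exact List.Sublist.append_left (y.sublist_cons_self c) x
    · intro hh
      apply_fun List.length at hh
      rw [hw] at hh
      simp at hh
  · intro h u' hsub hne hcong
    obtain ⟨x, c, y, rfl, hs⟩ := exists_del hsub hne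
    have h1 : SimonCong m (x ++ y) (x ++ c :: y) :=
      simon_sandwich hs (List.Sublist.append_left (y.sublist_cons_self c) x) hcong
    have h2 := (del_char x y c m).mp h1
    have hlt := h x c y rfl
    omega

theorem sd_le_of_head (p q : A) (v : List A) (hv : v = [] ∨ ∃ v₀, v = p :: v₀) :
    sd q v ≤ sd p v := by
  rcases hv with rfl | ⟨v₀, rfl⟩
  · simp
  · by_cases hpq : p = q
    · subst hpq; exact le_rfl
    · rw [sd_cons_self, sd_cons_ne (fun h => hpq h) v₀]
      omega

theorem sd_key1 {p q : A} (hpq : p ≠ q) (v : List A) (hv : v = [] ∨ ∃ v₀, v = p :: v₀) :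
    sd q (p :: q :: v) = 1 + sd q v := by
  have h1 := sd_le_of_head p q v hv
  rw [sd_cons_ne hpq, sd_cons_self, sd_cons_ne (Ne.symm hpq)]
  omega

theorem sd_insert {p q : A} (hpq : p ≠ q) (hbin : ∀ e : A, e = p ∨ e = q)
    {v : List A} (hv : v = [] ∨ ∃ v₀, v = p :: v₀) :
    ∀ (y : List A) (c : A), ((y = [] ∧ c = q) ∨ y.getLast? = some q) →
      sd c (y ++ p :: q :: v) = 1 + sd c (y ++ v) := by
  intro y
  induction y with
  | nil =>
    intro c hc
    have hcq : c = q := by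
      rcases hc with ⟨_, h⟩ | h
      · exact h
      · simp at h
    subst hcq
    simp only [List.nil_append]
    exact sd_key1 hpq v hv
  | cons e y' ih =>
    intro c hc
    have hlast : (y' = [] ∧ e = q) ∨ y'.getLast? = some q := by
      rcases hc with ⟨h, _⟩ | h
      · exact absurd h (by simp)
      · cases y' with
        | nil => left; exact ⟨rfl, by simpa using h⟩
        | cons f y'' => right; rw [List.getLast?_cons_cons] at h; exact h
    rcases hlast with ⟨rfl, heq⟩ | hlast
    · -- y = [q]
      rw [heq]
      have h1 := sd_le_of_head p q v hv
      simp only [List.cons_append, List.nil_append]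
      rcases hbin c with rfl | rfl
      · simp only [sd_cons_self, sd_cons_ne hpq, sd_cons_ne (Ne.symm hpq)]
        omega
      · simp only [sd_cons_self, sd_cons_ne hpq, sd_cons_ne (Ne.symm hpq)]
        omega
    · have ihc := ih c (Or.inr hlast)
      have ihe := ih e (Or.inr hlast)
      by_cases hec : e = c
      · subst hec
        simp only [List.cons_append, sd_cons_self, ihc]
      · simp only [List.cons_append, sd_cons_ne hec, ihc, ihe]
        omega

theorem split_cases {x y u m : List A} {c : A} (h : x ++ c :: y = u ++ m) :
    (∃ y', u = x ++ c :: y' ∧ y = y' ++ m) ∨ (∃ x', x = u ++ x' ∧ m = x' ++ c :: y) := by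
  rcases List.append_eq_append_iff.mp h with ⟨k, hk1, hk2⟩ | ⟨k, hk1, hk2⟩
  · cases k with
    | nil =>
      right
      exact ⟨[], by simp [hk1], by simpa using hk2.symm⟩
    | cons e k' =>
      left
      injection hk2 with h1 h2
      exact ⟨k', by rw [hk1, h1], by simpa using h2⟩
  · right; exact ⟨k, hk1, hk2⟩

section Transfer

variable {a b : A}

theorem cond_u {u : List A} (hu' : u = [] ∨ ∃ u₀, u = u₀ ++ [b]) {x y' : List A} {c : A}
    (h : u = x ++ c :: y') : (y' = [] ∧ c = b) ∨ y'.getLast? = some b := by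
  rcases hu' with rfl | ⟨u₀, hu0⟩
  · exact absurd h.symm (by simp)
  · have hl : u.getLast? = some b := by rw [hu0]; simp
    rw [h, List.getLast?_append_cons] at hl
    cases y' with
    | nil =>
      left
      refine ⟨rfl, ?_⟩
      simpa using hl
    | cons f y'' =>
      right
      rw [List.getLast?_cons_cons] at hl
      exact hl

theorem cond_v {v : List A} (hv' : v = [] ∨ ∃ v₀, v = a :: v₀) {x' y : List A} {c : A}
    (h : v = x' ++ c :: y) : (x'.reverse = [] ∧ c = a) ∨ x'.reverse.getLast? = some a := by
  rcases hv' with rfl | ⟨v₀, hv0⟩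
  · exact absurd h.symm (by simp)
  · rw [hv0] at h
    cases x' with
    | nil =>
      left
      refine ⟨by simp, ?_⟩
      injection h with h1 _
      exact h1.symm
    | cons f x'' =>
      right
      injection h with h1 _
      have hgl : (f :: x'').reverse.getLast? = some f := by simp
      rw [hgl, ← h1]

theorem sd_v_split (hab : a ≠ b) (hbin : ∀ e : A, e = a ∨ e = b)
    {u v : List A} (hu' : u = [] ∨ ∃ u₀, u = u₀ ++ [b]) (hv' : v = [] ∨ ∃ v₀, v = a :: v₀)
    {x' y : List A} {c : A} (h : v = x' ++ c :: y) :
    sd c (u ++ a :: b :: x').reverse = 1 + sd c (u ++ x').reverse := by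
  have hbin' : ∀ e : A, e = b ∨ e = a := fun e => (hbin e).symm
  have hvr : u.reverse = [] ∨ ∃ w, u.reverse = b :: w := by
    rcases hu' with rfl | ⟨u₀, rfl⟩
    · left; simp
    · right; exact ⟨u₀.reverse, by simp⟩
  have hcond := cond_v hv' h
  have hins := sd_insert (Ne.symm hab) hbin' hvr x'.reverse c hcond
  have e1 : (u ++ a :: b :: x').reverse = x'.reverse ++ b :: a :: u.reverse := by simp
  have e2 : (u ++ x').reverse = x'.reverse ++ u.reverse := by simp
  rw [e1, e2, hins]

theorem mred_fw (hab : a ≠ b) (hbin : ∀ e : A, e = a ∨ e = b)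
    {u v : List A} (hu' : u = [] ∨ ∃ u₀, u = u₀ ++ [b]) (hv' : v = [] ∨ ∃ v₀, v = a :: v₀)
    (m : ℕ) (h : MReduced m (u ++ v)) : MReduced (m + 1) (u ++ a :: b :: v) := by
  rw [mreduced_iff] at h ⊢
  intro x c y hw
  rcases split_cases hw.symm with ⟨y', hu2, rfl⟩ | ⟨x', rfl, hm⟩
  · -- deletion inside u
    have hcond := cond_u hu' hu2
    have hval := sd_insert hab hbin hv' y' c hcond
    have hless := h x c (y' ++ v) (by rw [hu2]; simp)
    rw [hval]
    omega
  · cases x' with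
    | nil =>
      try simp only [List.nil_append] at hm
      injection hm with h1 h2
      subst h1
      subst h2
      simp only [List.append_nil]
      -- marker a
      rcases hv' with rfl | ⟨v₀, rfl⟩
      · rcases hu' with rfl | ⟨u₀, rfl⟩
        · simp only [List.reverse_nil, sd_nil, sd_cons_ne (Ne.symm hab)]
          simp
        · have hless := h u₀ b [] (by simp)
          have e1 : (u₀ ++ [b]).reverse = b :: u₀.reverse := by simp
          rw [e1]
          simp only [sd_cons_ne (Ne.symm hab), sd_nil] at hless ⊢
          omega
      · have hless := h u a v₀ rfl
        simp only [sd_cons_ne (Ne.symm hab), sd_cons_self, sd_cons_ne hab] at hless ⊢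
        omega
    | cons e x'' =>
      injection hm with h1 hm2
      subst h1
      cases x'' with
      | nil =>
        try simp only [List.nil_append] at hm2
        injection hm2 with h2 h3
        subst h2
        subst h3
        -- marker b
        have e1 : (u ++ [a]).reverse = a :: u.reverse := by simp
        rw [e1]
        rcases hu' with rfl | ⟨u₀, rfl⟩
        · rcases hv' with rfl | ⟨v₀, rfl⟩
          · simp only [List.reverse_nil, sd_nil, sd_cons_ne hab]
            simp
          · have hless := h [] a v₀ (by simp)
            simp only [List.reverse_nil, sd_nil, sd_cons_ne hab, sd_cons_self,
              sd_cons_ne (Ne.symm hab)] at hless ⊢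
            omega
        · have hless := h u₀ b v (by simp)
          have e2 : (u₀ ++ [b]).reverse = b :: u₀.reverse := by simp
          rw [e2]
          simp only [sd_cons_ne hab, sd_cons_self, sd_cons_ne (Ne.symm hab)] at hless ⊢
          omega
      | cons f x''' =>
        injection hm2 with h2 hm3
        subst h2
        -- deletion inside v
        have hval := sd_v_split hab hbin hu' hv' hm3
        rw [hval]
        have hless := h (u ++ x''') c y (by rw [hm3]; simp)
        omega

theorem mred_bw (hab : a ≠ b) (hbin : ∀ e : A, e = a ∨ e = b)
    {u v : List A} (hu' : u = [] ∨ ∃ u₀, u = u₀ ++ [b]) (hv' : v = [] ∨ ∃ v₀, v = a :: v₀)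
    (m : ℕ) (h : MReduced (m + 1) (u ++ a :: b :: v)) : MReduced m (u ++ v) := by
  rw [mreduced_iff] at h ⊢
  intro x c y hw
  rcases split_cases hw.symm with ⟨y', hu2, rfl⟩ | ⟨x', rfl, hm⟩
  · have hcond := cond_u hu' hu2
    have hval := sd_insert hab hbin hv' y' c hcond
    have hless := h x c (y' ++ a :: b :: v) (by rw [hu2]; simp)
    rw [hval] at hless
    omega
  · have hval := sd_v_split hab hbin hu' hv' hm
    have hless := h (u ++ a :: b :: x') c y (by rw [hm]; simp)
    rw [hval] at hless
    omega

end Transfer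

theorem mred_len (w : List A) : MReduced w.length w := by
  intro u' hsub hne hc
  have hw : w.Sublist u' := (hc w le_rfl).mpr (List.Sublist.refl w)
  exact hne (hsub.antisymm hw)

end Stmt18Aux

open Stmt18Aux in
theorem stmt18 {A : Type*} [Fintype A] (hA : Fintype.card A = 2)
    (a b : A) (hab : a ≠ b) (u v : List A)
    (hu : u.getLast? ≠ some a) (hv : v.head? ≠ some b) :
    rho (u ++ a :: b :: v) = 1 + rho (u ++ v) := by
  classical
  have hbin : ∀ e : A, e = a ∨ e = b := by
    intro e
    have hcard : ({a, b} : Finset A) = Finset.univ := by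
      apply Finset.eq_of_subset_of_card_le (Finset.subset_univ _)
      rw [Finset.card_univ, hA, Finset.card_pair hab]
    have he : e ∈ ({a, b} : Finset A) := hcard ▸ Finset.mem_univ e
    simpa using he
  have hu' : u = [] ∨ ∃ u₀, u = u₀ ++ [b] := by
    rcases List.eq_nil_or_concat u with rfl | ⟨u₀, e, rfl⟩
    · exact Or.inl rfl
    · right
      rw [List.concat_eq_append] at hu ⊢
      refine ⟨u₀, ?_⟩
      have hgl : (u₀ ++ [e]).getLast? = some e := by simp
      rcases hbin e with rfl | rfl
      · exact absurd hgl hu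
      · rfl
  have hv' : v = [] ∨ ∃ v₀, v = a :: v₀ := by
    cases v with
    | nil => exact Or.inl rfl
    | cons e v₀ =>
      right
      refine ⟨v₀, ?_⟩
      rcases hbin e with rfl | rfl
      · rfl
      · exact absurd rfl hv
  have hS2ne : {m : ℕ | MReduced m (u ++ v)}.Nonempty := ⟨_, mred_len (u ++ v)⟩
  have hS1ne : {m : ℕ | MReduced m (u ++ a :: b :: v)}.Nonempty :=
    ⟨_, mred_len (u ++ a :: b :: v)⟩
  have hn : MReduced (sInf {m : ℕ | MReduced m (u ++ v)}) (u ++ v) := Nat.sInf_mem hS2ne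
  have h1 : sInf {m : ℕ | MReduced m (u ++ a :: b :: v)} ≤
      sInf {m : ℕ | MReduced m (u ++ v)} + 1 :=
    Nat.sInf_le (mred_fw hab hbin hu' hv' _ hn)
  have hmem : sInf {m : ℕ | MReduced m (u ++ a :: b :: v)} ∈
      {m : ℕ | MReduced m (u ++ a :: b :: v)} := Nat.sInf_mem hS1ne
  have h0 : sInf {m : ℕ | MReduced m (u ++ a :: b :: v)} ≠ 0 := by
    intro h0
    have hz : MReduced 0 (u ++ a :: b :: v) := by
      have hm0 := hmem
      rwa [h0] at hm0
    have := (mreduced_iff 0 (u ++ a :: b :: v)).mp hz u a (b :: v) rfl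
    omega
  obtain ⟨k, hk⟩ : ∃ k, sInf {m : ℕ | MReduced m (u ++ a :: b :: v)} = k + 1 :=
    ⟨sInf {m : ℕ | MReduced m (u ++ a :: b :: v)} - 1, by omega⟩
  have hk1 : MReduced (k + 1) (u ++ a :: b :: v) := by
    have hm1 := hmem
    rwa [hk] at hm1
  have h2 : sInf {m : ℕ | MReduced m (u ++ v)} ≤ k :=
    Nat.sInf_le (mred_bw hab hbin hu' hv' _ hk1)
  show sInf {m : ℕ | MReduced m (u ++ a :: b :: v)} = 1 + sInf {m : ℕ | MReduced m (u ++ v)}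
  omega
end

section
/- Let A be an alphabet with exactly 2 letters. Then every word u over A satisfies |u| ≤ ⌊h(u)²/4⌋ + h(u) − 1, where |u| is the length of u. -/
section Aux

variable {A : Type*} [DecidableEq A]

/-- The "absorption capacity" of a word w.r.t. a letter (Simon's r-value),
reading from the left. -/
def cap : List A → A → ℕ
  | [], _ => 0
  | c :: t, a => if c = a then cap t a + 1 else min (cap t a) (cap t c + 1)

lemma cap_cons (c : A) (t : List A) (a : A) :
    cap (c :: t) a = if c = a then cap t a + 1 else min (cap t a) (cap t c + 1) := rfl

lemma cap_prop : ∀ (s z : List A) (a : A), z.Sublist s → z.length < cap s a →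
    (a :: z).Sublist s := by
  intro s
  induction s with
  | nil => intro z a _ h; simp [cap] at h
  | cons c t ih =>
    intro z a hz hlen
    by_cases hca : c = a
    · subst hca
      rw [cap_cons, if_pos rfl] at hlen
      cases hz with
      | cons _ h => exact List.cons_sublist_cons.2 h
      | cons_cons _ h =>
        exact List.cons_sublist_cons.2 (ih _ c h (by simpa using hlen))
    · rw [cap_cons, if_neg hca] at hlen
      cases hz with
      | cons _ h =>
        exact ((ih z a h (lt_of_lt_of_le hlen (min_le_left _ _)))).trans
          (List.sublist_cons_self c t)
      | cons_cons _ h =>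
        rename_i z'
        have h1 : z'.length < cap t c := by
          have := lt_of_lt_of_le hlen (min_le_right _ _)
          simpa using this
        have hz_t : (c :: z').Sublist t := ih z' c h h1
        have h2 : (c :: z').length < cap t a := by
          have := lt_of_lt_of_le hlen (min_le_left _ _)
          simpa using this
        exact (ih (c :: z') a hz_t h2).trans (List.sublist_cons_self c t)

/-- Insertion pumping lemma. -/
lemma pump (p s : List A) (c : A) (n : ℕ)
    (h : n ≤ cap p.reverse c + cap s c) :
    SimonCong n (p ++ s) (p ++ c :: s) := by
  intro w hw
  constructor
  · intro hsub
    exact hsub.trans ((List.Sublist.refl p).append (List.sublist_cons_self c s))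
  · intro hsub
    rcases List.sublist_append_iff.1 hsub with ⟨w1, w2, hw12, hw1, hw2⟩
    have hcs : c :: s = [c] ++ s := rfl
    rw [hcs] at hw2
    rcases List.sublist_append_iff.1 hw2 with ⟨w2a, w3, hw23, hw2a, hw3⟩
    subst hw12; subst hw23
    rcases List.sublist_singleton.mp hw2a with h0 | h0
    · subst h0
      simpa using hw1.append hw3
    · subst h0
      have hlen : w1.length + w3.length + 1 ≤ n := by
        have h' := hw
        simp [List.length_append] at h'
        omega
      by_cases hcase : w1.length < cap p.reverse c
      · have hc1 : (c :: w1.reverse).Sublist p.reverse :=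
          cap_prop _ _ _ (List.reverse_sublist.2 hw1) (by simpa using hcase)
        have h4 : (w1 ++ [c]).Sublist p := by
          have := List.reverse_sublist.2 hc1
          simpa using this
        have h5 : (w1 ++ [c] ++ w3).Sublist (p ++ s) := h4.append hw3
        simpa [List.append_assoc] using h5
      · have h5 : w3.length < cap s c := by omega
        have h6 : (c :: w3).Sublist s := cap_prop _ _ _ hw3 h5
        exact hw1.append h6

/-- value of the capacity of the reversed prefix before position `i`,
w.r.t. the letter at position `i`. -/
def aval (d : A) (u : List A) (i : ℕ) : ℕ := cap ((u.take i).reverse) (u.getD i d)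

/-- value of the capacity of the suffix after position `i`,
w.r.t. the letter at position `i`. -/
def bval (d : A) (u : List A) (i : ℕ) : ℕ := cap (u.drop (i + 1)) (u.getD i d)

/-- Potential function for the counting argument. -/
def phi (v x y : ℕ) : ℕ := min (min x y) (v + 1) + (if v + 1 ≤ max x y then 1 else 0)

lemma phi_le (v x y : ℕ) : phi v x y ≤ v + 2 := by
  unfold phi; split_ifs <;> omega

lemma phi_symm (v x y : ℕ) : phi v x y = phi v y x := by
  unfold phi; rw [min_comm x y, max_comm x y]

lemma phi_step (v x y : ℕ) :
    phi v x y + (if x = v then 1 else 0) ≤ phi v (x + 1) (min y (x + 1)) := by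
  unfold phi; split_ifs <;> omega

/-- How the two capacities evolve when a letter is prepended. -/
lemma cap_state (a0 b0 : A) (hab : a0 ≠ b0) (hcov : ∀ c : A, c = a0 ∨ c = b0)
    (c : A) (l : List A) :
    (cap (c :: l) a0 = cap l a0 + 1 ∧ cap (c :: l) b0 = min (cap l b0) (cap l a0 + 1)
      ∧ cap l c = cap l a0) ∨
    (cap (c :: l) b0 = cap l b0 + 1 ∧ cap (c :: l) a0 = min (cap l a0) (cap l b0 + 1)
      ∧ cap l c = cap l b0) := by
  rcases hcov c with hc | hc <;> subst hc
  · left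
    refine ⟨by rw [cap_cons, if_pos rfl], ?_, rfl⟩
    rw [cap_cons, if_neg hab]
  · right
    refine ⟨by rw [cap_cons, if_pos rfl], ?_, rfl⟩
    rw [cap_cons, if_neg (Ne.symm hab)]

/-- Core counting: the number of positions whose `aval` equals `v` is bounded
by the potential of the capacity state. -/
lemma acount_le (a0 b0 : A) (hab : a0 ≠ b0) (hcov : ∀ c : A, c = a0 ∨ c = b0)
    (d : A) (u : List A) (v : ℕ) :
    List.countP (fun i => aval d u i = v) (List.range u.length)
      ≤ phi v (cap u.reverse a0) (cap u.reverse b0) := by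
  induction u using List.reverseRecOn with
  | nil => simp
  | append_singleton u c IH =>
    have hlen : (u ++ [c]).length = u.length + 1 := by simp
    rw [hlen, List.range_succ, List.countP_append]
    have hsame : List.countP (fun i => aval d (u ++ [c]) i = v) (List.range u.length)
        = List.countP (fun i => aval d u i = v) (List.range u.length) := by
      apply List.countP_congr
      intro i hi
      have hi' : i < u.length := List.mem_range.1 hi
      have h1 : (u ++ [c]).take i = u.take i :=
        List.take_append_of_le_length (le_of_lt hi')
      have h2 : (u ++ [c]).getD i d = u.getD i d := List.getD_append _ _ _ _ hi'
      have h3 : aval d (u ++ [c]) i = aval d u i := by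
        unfold aval; rw [h1, h2]
      rw [h3]
    have hnew : aval d (u ++ [c]) u.length = cap u.reverse c := by
      have h1 : (u ++ [c]).take u.length = u := List.take_left
      have h2 : (u ++ [c]).getD u.length d = c := by
        have h3 : (u ++ [c]).getD u.length d = (u ++ [c])[u.length]'(by simp) :=
          List.getD_eq_getElem _ _ (by simp)
        rw [h3]
        simp
      simp only [aval]
      rw [h1, h2]
    have hind : List.countP (fun i => aval d (u ++ [c]) i = v) [u.length]
        = if cap u.reverse c = v then 1 else 0 := by
      simp only [List.countP_cons, List.countP_nil, hnew]
      split_ifs <;> simp_all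
    have hrev : (u ++ [c]).reverse = c :: u.reverse := by simp
    rw [hrev, hsame, hind]
    rcases cap_state a0 b0 hab hcov c u.reverse with ⟨h1, h2, h3⟩ | ⟨h1, h2, h3⟩
    · rw [h1, h2, h3]
      exact le_trans (Nat.add_le_add_right IH _) (phi_step v _ _)
    · rw [h1, h2, h3, phi_symm]
      have IH' : List.countP (fun i => aval d u i = v) (List.range u.length)
          ≤ phi v (cap u.reverse b0) (cap u.reverse a0) := by
        rw [phi_symm]; exact IH
      exact le_trans (Nat.add_le_add_right IH' _) (phi_step v _ _)

/-- Core counting for suffix values: induction from the left. -/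
lemma bcount_le (a0 b0 : A) (hab : a0 ≠ b0) (hcov : ∀ c : A, c = a0 ∨ c = b0)
    (d : A) (u : List A) (w : ℕ) :
    List.countP (fun i => bval d u i = w) (List.range u.length)
      ≤ phi w (cap u a0) (cap u b0) := by
  induction u with
  | nil => simp
  | cons c t IH =>
    have hlen : (c :: t).length = t.length + 1 := rfl
    rw [hlen, List.range_succ_eq_map, List.countP_cons, List.countP_map]
    have hnew : bval d (c :: t) 0 = cap t c := by simp [bval]
    have hsame : List.countP ((fun i => bval d (c :: t) i = w) ∘ Nat.succ) (List.range t.length)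
        = List.countP (fun i => bval d t i = w) (List.range t.length) := by
      apply List.countP_congr
      intro i _
      simp [bval, Function.comp]
    rw [hsame, hnew]
    have hind : (if (decide (cap t c = w)) = true then 1 else 0)
        = if cap t c = w then 1 else 0 := by simp
    rw [hind]
    rcases cap_state a0 b0 hab hcov c t with ⟨h1, h2, h3⟩ | ⟨h1, h2, h3⟩
    · rw [h1, h2, h3]
      exact le_trans (Nat.add_le_add_right IH _) (phi_step w _ _)
    · rw [h1, h2, h3, phi_symm]
      have IH' : List.countP (fun i => bval d t i = w) (List.range t.length)
          ≤ phi w (cap t b0) (cap t a0) := by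
        rw [phi_symm]; exact IH
      exact le_trans (Nat.add_le_add_right IH' _) (phi_step w _ _)

/-- Counting positions with `f` value below a threshold via per-value counts. -/
lemma countP_lt_le_sum (f : ℕ → ℕ) (l : List ℕ) (B : ℕ) :
    List.countP (fun i => f i < B) l ≤ ∑ w ∈ Finset.range B, List.countP (fun i => f i = w) l := by
  induction l with
  | nil => simp
  | cons x t IH =>
    simp only [List.countP_cons]
    rw [Finset.sum_add_distrib]
    have hsum : (∑ w ∈ Finset.range B, if (fun i => decide (f i = w)) x = true then 1 else 0)
        = if f x ∈ Finset.range B then 1 else 0 := by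
      simp only [decide_eq_true_eq]
      rw [← Finset.sum_ite_eq (Finset.range B) (f x) (fun _ => 1)]
    rw [hsum]
    refine add_le_add IH ?_
    by_cases h : f x < B
    · simp [h, Finset.mem_range]
    · simp [h]

lemma gauss_sum (M : ℕ) : 2 * (∑ v ∈ Finset.range M, (v + 2)) = M * (M + 3) := by
  induction M with
  | zero => simp
  | succ m IH =>
    rw [Finset.sum_range_succ, Nat.mul_add, IH]
    ring

end Aux

theorem stmt19 {A : Type*} [Fintype A] (hA : Fintype.card A = 2) (u : List A) :
    u.length ≤ pieceH u ^ 2 / 4 + pieceH u - 1 := by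
  classical
  -- two letters covering the alphabet
  obtain ⟨a0, b0, hab, huniv⟩ := (Finset.card_eq_two (s := (Finset.univ : Finset A))).1 (by rw [Finset.card_univ]; exact hA)
  have hcov : ∀ c : A, c = a0 ∨ c = b0 := by
    intro c
    have hc : c ∈ (Finset.univ : Finset A) := Finset.mem_univ c
    rw [huniv] at hc
    simpa using hc
  set n := pieceH u with hn
  set N := u.length with hN
  -- the defining set of pieceH is nonempty and pieceH u belongs to it
  have hmem : (N + 1) ∈ {m : ℕ | ∀ v : List A, SimonCong m u v → v = u} := by
    intro v hv
    have huv : u.Sublist v := (hv u (by omega)).1 (List.Sublist.refl u)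
    by_cases hvl : v.length ≤ N + 1
    · exact ((hv v hvl).2 (List.Sublist.refl v)).antisymm huv
    · exfalso
      have h1 : (v.take (N + 1)).Sublist v := List.take_sublist _ _
      have h2 : (v.take (N + 1)).length = N + 1 := by
        rw [List.length_take]; omega
      have h3 : (v.take (N + 1)).Sublist u := (hv _ (le_of_eq h2)).2 h1
      have h4 := h3.length_le
      omega
  have hinf : ∀ v : List A, SimonCong n u v → v = u :=
    Nat.sInf_mem (⟨N + 1, hmem⟩ : Set.Nonempty _)
  -- no insertion pump is possible at order n
  have hcon : ∀ (p s : List A) (c : A), u = p ++ s → cap p.reverse c + cap s c < n := by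
    intro p s c hsplit
    by_contra hc
    push_neg at hc
    have hSC : SimonCong n (p ++ s) (p ++ c :: s) := pump p s c n hc
    rw [← hsplit] at hSC
    have heq := hinf (p ++ c :: s) hSC
    have hlen : (p ++ c :: s).length = u.length := by rw [heq]
    rw [hsplit] at hlen
    simp at hlen
  -- positional constraints
  have hpos : ∀ i < N, aval a0 u i + bval a0 u i + 2 ≤ n := by
    intro i hi
    have hsplit : u = u.take i ++ u.drop i := (List.take_append_drop i u).symm
    have hcp := hcon (u.take i) (u.drop i) (u.getD i a0) hsplit
    have hdrop : u.drop i = u.getD i a0 :: u.drop (i + 1) := by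
      rw [List.getD_eq_getElem u a0 hi]
      exact List.drop_eq_getElem_cons hi
    rw [hdrop, cap_cons, if_pos rfl] at hcp
    unfold aval bval
    omega
  -- n ≥ 1
  have hn1 : 1 ≤ n := by
    have := hcon [] u a0 rfl
    omega
  -- if N = 0, trivial
  rcases Nat.eq_zero_or_pos N with hN0 | hNpos
  · rw [hN0]; omega
  -- n ≥ 2
  have hn2 : 2 ≤ n := by
    have := hpos 0 hNpos
    omega
  set A' := (n - 2) / 2 with hA'
  -- class split
  have hsplit2 : N = List.countP (fun i => aval a0 u i < A' + 1) (List.range N)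
      + List.countP (fun i => ¬ (aval a0 u i < A' + 1)) (List.range N) := by
    have := List.length_eq_countP_add_countP (fun i => aval a0 u i < A' + 1) (l := List.range N)
    simpa using this
  have hclass1 : List.countP (fun i => aval a0 u i < A' + 1) (List.range N)
      ≤ ∑ v ∈ Finset.range (A' + 1), (v + 2) := by
    calc List.countP (fun i => aval a0 u i < A' + 1) (List.range N)
        ≤ ∑ v ∈ Finset.range (A' + 1), List.countP (fun i => aval a0 u i = v) (List.range N) :=
          countP_lt_le_sum _ _ _
      _ ≤ ∑ v ∈ Finset.range (A' + 1), (v + 2) := by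
          apply Finset.sum_le_sum
          intro v _
          exact le_trans (acount_le a0 b0 hab hcov a0 u v) (phi_le _ _ _)
  have hclass2 : List.countP (fun i => ¬ (aval a0 u i < A' + 1)) (List.range N)
      ≤ ∑ w ∈ Finset.range (n - A' - 2), (w + 2) := by
    calc List.countP (fun i => ¬ (aval a0 u i < A' + 1)) (List.range N)
        ≤ List.countP (fun i => bval a0 u i < n - A' - 2) (List.range N) := by
          apply List.countP_mono_left
          intro i hi
          have hiN : i < N := List.mem_range.1 hi
          have hp := hpos i hiN
          simp only [decide_eq_true_eq]
          omega
      _ ≤ ∑ w ∈ Finset.range (n - A' - 2), List.countP (fun i => bval a0 u i = w)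
            (List.range N) := countP_lt_le_sum _ _ _
      _ ≤ ∑ w ∈ Finset.range (n - A' - 2), (w + 2) := by
          apply Finset.sum_le_sum
          intro w _
          exact le_trans (bcount_le a0 b0 hab hcov a0 u w) (phi_le _ _ _)
  -- arithmetic conclusion
  have hS1 := gauss_sum (A' + 1)
  have hS2 := gauss_sum (n - A' - 2)
  have htot : 2 * N ≤ (A' + 1) * (A' + 4) + (n - A' - 2) * (n - A' + 1) := by
    have h2 : n - A' - 2 + 3 = n - A' + 1 := by omega
    rw [← hS1, ← h2, ← hS2]
    omega
  -- case on parity of n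
  rcases Nat.even_or_odd n with he | ho
  · obtain ⟨m, hm'⟩ := he
    have hnm : n = 2 * m := by omega
    have hmm : 1 ≤ m := by omega
    have key : 2 * N ≤ m * (m + 3) + (m - 1) * (m + 2) := by
      have e1 : A' + 1 = m := by omega
      have e2 : A' + 4 = m + 3 := by omega
      have e3 : n - A' - 2 = m - 1 := by omega
      have e4 : n - A' + 1 = m + 2 := by omega
      rw [e1, e2, e3, e4] at htot
      exact htot
    have hsq : n ^ 2 = 4 * (m * m) := by
      rw [hnm]; ring
    rw [hsq]
    obtain ⟨k, hk⟩ : ∃ k, m = k + 1 := ⟨m - 1, by omega⟩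
    have hexp : m * (m + 3) + (m - 1) * (m + 2) + 2 = 2 * (m * m) + 4 * m := by
      subst hk
      simp only [Nat.add_sub_cancel]
      ring
    omega

  · obtain ⟨m, hm'⟩ := ho
    have hnm : n = 2 * m + 1 := by omega
    have hmm : 1 ≤ m := by omega
    have key : 2 * N ≤ m * (m + 3) + m * (m + 3) := by
      have e1 : A' + 1 = m := by omega
      have e2 : A' + 4 = m + 3 := by omega
      have e3 : n - A' - 2 = m := by omega
      have e4 : n - A' + 1 = m + 3 := by omega
      rw [e1, e2, e3, e4] at htot
      exact htot
    have hsq : n ^ 2 = 4 * (m * m) + 4 * m + 1 := by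
      rw [hnm]; ring
    rw [hsq]
    have hexp : m * (m + 3) + m * (m + 3) = 2 * (m * m) + 6 * m := by ring
    omega
end
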